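/- arXiv:2108.03570 — 3 statements merged into one kernel-verified Lean document; each statement's English description precedes it below -/
import Mathlib

section
/- Let g ~ N(0,1) and e ~ N(0,σ²) be independent Gaussian random variables, and let θ(g) = sign(g + e). Then E[θ(g)·g] = √(2/(π(1+σ²))). -/
open MeasureTheory ProbabilityTheory Real

noncomputable def sgn (x : ℝ) : ℝ := if 0 < x then 1 else -1

lemma sgn_measurable : Measurable sgn := by
  unfold sgn
  exact Measurable.ite (measurableSet_Ioi (a := (0:ℝ))) measurable_const measurable_const

lemma abs_sgn (x : ℝ) : |sgn x| = 1 := by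
  unfold sgn; split <;> norm_num

lemma integral_gaussian_eq (m : ℝ) {v : NNReal} (hv : v ≠ 0) (f : ℝ → ℝ) :
    ∫ x, f x ∂(gaussianReal m v) = ∫ x, gaussianPDFReal m v x * f x := by
  rw [gaussianReal_of_var_ne_zero _ hv]
  have h : (gaussianPDF m v) = fun x => ((Real.toNNReal (gaussianPDFReal m v x) : NNReal) : ENNReal) := by
    funext x; rfl
  rw [h, integral_withDensity_eq_integral_smul
    ((measurable_gaussianPDFReal m v).real_toNNReal)]
  congr 1; funext x
  rw [NNReal.smul_def, Real.coe_toNNReal _ (gaussianPDFReal_nonneg m v x), smul_eq_mul]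

lemma integrable_gaussian_iff (m : ℝ) {v : NNReal} (hv : v ≠ 0) (f : ℝ → ℝ) :
    Integrable f (gaussianReal m v) ↔ Integrable (fun x => gaussianPDFReal m v x * f x) volume := by
  rw [gaussianReal_of_var_ne_zero _ hv]
  have h : (gaussianPDF m v) = fun x => ((Real.toNNReal (gaussianPDFReal m v x) : NNReal) : ENNReal) := by
    funext x; rfl
  rw [h, integrable_withDensity_iff_integrable_smul
    ((measurable_gaussianPDFReal m v).real_toNNReal)]
  constructor <;> intro h' <;> refine h'.congr (Filter.Eventually.of_forall fun x => ?_) <;>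
    simp [NNReal.smul_def, Real.coe_toNNReal _ (gaussianPDFReal_nonneg m v x)]

lemma integrable_xexp : Integrable (fun x : ℝ => x * rexp (-x^2/2)) volume := by
  have := integrable_mul_exp_neg_mul_sq (b := 1/2) (by norm_num)
  refine this.congr (Filter.Eventually.of_forall fun x => ?_)
  ring_nf

lemma hasDerivAt_negexp (x : ℝ) :
    HasDerivAt (fun x : ℝ => -rexp (-x^2/2)) (x * rexp (-x^2/2)) x := by
  have h1 : HasDerivAt (fun x : ℝ => -x^2/2) (-x) x := by
    have := ((hasDerivAt_pow 2 x).neg).div_const 2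
    exact this.congr_deriv (by norm_num; ring)
  have := (h1.exp).neg
  exact this.congr_deriv (by ring)

lemma tendsto_negexp_top : Filter.Tendsto (fun x : ℝ => -rexp (-x^2/2)) Filter.atTop (nhds 0) := by
  have h : Filter.Tendsto (fun x : ℝ => -x^2/2) Filter.atTop Filter.atBot := by
    simp only [neg_div]
    exact Filter.tendsto_neg_atBot_iff.2
      ((Filter.tendsto_pow_atTop (α := ℝ) (n := 2) (by norm_num)).atTop_div_const (by norm_num))
  simpa using (Real.tendsto_exp_atBot.comp h).neg

lemma tendsto_negexp_bot : Filter.Tendsto (fun x : ℝ => -rexp (-x^2/2)) Filter.atBot (nhds 0) := by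
  have hsq : Filter.Tendsto (fun x : ℝ => x^2) Filter.atBot Filter.atTop := by
    have := (Filter.tendsto_pow_atTop (α := ℝ) (n := 2) (by norm_num)).comp (Filter.tendsto_neg_atBot_atTop (G := ℝ))
    simpa [Function.comp_def, neg_sq] using this
  have h : Filter.Tendsto (fun x : ℝ => -x^2/2) Filter.atBot Filter.atBot := by
    simp only [neg_div]
    exact Filter.tendsto_neg_atBot_iff.2 (hsq.atTop_div_const (by norm_num))
  simpa using (Real.tendsto_exp_atBot.comp h).neg

lemma L1 (a : ℝ) : ∫ x in Set.Ioi a, x * rexp (-x^2/2) = rexp (-a^2/2) := by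
  have := integral_Ioi_of_hasDerivAt_of_tendsto' (f := fun x : ℝ => -rexp (-x^2/2))
    (f' := fun x : ℝ => x * rexp (-x^2/2)) (a := a)
    (fun x _ => hasDerivAt_negexp x) integrable_xexp.integrableOn tendsto_negexp_top
  rw [this]; ring

lemma L2 (a : ℝ) : ∫ x in Set.Iic a, x * rexp (-x^2/2) = -rexp (-a^2/2) := by
  have := integral_Iic_of_hasDerivAt_of_tendsto' (f := fun x : ℝ => -rexp (-x^2/2))
    (f' := fun x : ℝ => x * rexp (-x^2/2)) (a := a)
    (fun x _ => hasDerivAt_negexp x) integrable_xexp.integrableOn tendsto_negexp_bot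
  rw [this]; ring

lemma pdf_one (x : ℝ) : gaussianPDFReal 0 1 x = (Real.sqrt (2*π))⁻¹ * rexp (-x^2/2) := by
  simp [gaussianPDFReal]

lemma inner_int (y : ℝ) :
    ∫ x, sgn (x + y) * x ∂(gaussianReal 0 1) = (Real.sqrt (2*π))⁻¹ * (2 * rexp (-y^2/2)) := by
  rw [integral_gaussian_eq 0 one_ne_zero]
  simp_rw [pdf_one]
  have : ∀ x : ℝ, (Real.sqrt (2*π))⁻¹ * rexp (-x^2/2) * (sgn (x+y) * x)
      = (Real.sqrt (2*π))⁻¹ * (sgn (x+y) * (x * rexp (-x^2/2))) := fun x => by ring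
  simp_rw [this, integral_const_mul]
  congr 1
  have hIic : ∫ x in Set.Iic (-y), sgn (x+y) * (x * rexp (-x^2/2)) = rexp (-y^2/2) := by
    rw [setIntegral_congr_fun (g := fun x => -(x * rexp (-x^2/2))) measurableSet_Iic
      (fun x hx => by
        have : ¬ (0 < x + y) := by simp at hx ⊢; linarith
        simp only [sgn, if_neg this]; ring)]
    rw [integral_neg, L2]
    have : (-y)^2 = y^2 := by ring
    rw [this]; ring
  have hIoi : ∫ x in Set.Ioi (-y), sgn (x+y) * (x * rexp (-x^2/2)) = rexp (-y^2/2) := by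
    rw [setIntegral_congr_fun (g := fun x => x * rexp (-x^2/2)) measurableSet_Ioi
      (fun x hx => by
        have : 0 < x + y := by simp at hx ⊢; linarith
        simp only [sgn, if_pos this]; ring)]
    rw [L1]
    have : (-y)^2 = y^2 := by ring
    rw [this]
  have hint : IntegrableOn (fun x => sgn (x+y) * (x * rexp (-x^2/2))) (Set.Iic (-y)) volume := by
    refine (integrable_xexp.neg.integrableOn.congr_fun ?_ measurableSet_Iic)
    intro x hx
    have : ¬ (0 < x + y) := by simp at hx ⊢; linarith
    simp only [Pi.neg_apply, sgn, if_neg this]; ring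
  have hint2 : IntegrableOn (fun x => sgn (x+y) * (x * rexp (-x^2/2))) (Set.Ioi (-y)) volume := by
    refine (integrable_xexp.integrableOn.congr_fun ?_ measurableSet_Ioi)
    intro x hx
    have : 0 < x + y := by simp at hx ⊢; linarith
    simp only [sgn, if_pos this]; ring
  rw [← intervalIntegral.integral_Iic_add_Ioi hint hint2, hIic, hIoi]
  ring


lemma sqrt_key {x y : ℝ} (hx : 0 ≤ x) (h : x^2 = y) : x = Real.sqrt y := by
  rw [← h, Real.sqrt_sq hx]

lemma outer_int {σ : ℝ} (hσ : 0 < σ) :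
    ∫ y, (Real.sqrt (2*π))⁻¹ * (2 * rexp (-y^2/2))
        ∂(gaussianReal 0 (⟨σ^2, sq_nonneg σ⟩ : NNReal))
      = Real.sqrt (2/(π*(1+σ^2))) := by
  have hv : (⟨σ^2, sq_nonneg σ⟩ : NNReal) ≠ 0 := by
    intro h
    exact (pow_ne_zero 2 hσ.ne') (congrArg NNReal.toReal h)
  rw [integral_gaussian_eq _ hv]
  have hσ2 : (0:ℝ) < σ^2 := by positivity
  set b : ℝ := (1+σ^2)/(2*σ^2) with hb
  have hbpos : 0 < b := by positivity
  have hpt : ∀ y : ℝ, gaussianPDFReal 0 (⟨σ^2, sq_nonneg σ⟩ : NNReal) y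
      * ((Real.sqrt (2*π))⁻¹ * (2 * rexp (-y^2/2)))
      = ((Real.sqrt (2*π*σ^2))⁻¹ * ((Real.sqrt (2*π))⁻¹ * 2)) * rexp (-b*y^2) := by
    intro y
    rw [show gaussianPDFReal 0 (⟨σ^2, sq_nonneg σ⟩ : NNReal) y = (√(2*π*σ^2))⁻¹ * rexp (-(y-0)^2/(2*σ^2)) from rfl]
    simp only [gaussianPDFReal, NNReal.coe_mk, sub_zero]
    rw [show -b*y^2 = -y^2/(2*σ^2) + -y^2/2 from by rw [hb]; field_simp; ring, Real.exp_add]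
    ring
  simp_rw [hpt, MeasureTheory.integral_const_mul, integral_gaussian b]
  have hπb : (0:ℝ) ≤ π / b := le_of_lt (div_pos pi_pos hbpos)
  refine (sqrt_key (by positivity) ?_).symm.symm
  simp only [mul_pow, inv_pow,
    Real.sq_sqrt (by positivity : (0:ℝ) ≤ 2*π*σ^2),
    Real.sq_sqrt (by positivity : (0:ℝ) ≤ 2*π),
    Real.sq_sqrt hπb, hb]
  have h1 : π ≠ 0 := pi_ne_zero
  have h2 : σ ≠ 0 := hσ.ne'
  have h3 : (1:ℝ)+σ^2 ≠ 0 := by positivity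
  field_simp
  rw [Real.sq_sqrt (by positivity)]
  field_simp

theorem stmt_1 {Ω : Type*} [MeasurableSpace Ω] (μ : Measure Ω) [IsProbabilityMeasure μ]
    (g e : Ω → ℝ) (hgm : Measurable g) (hem : Measurable e)
    (σ : ℝ) (hσ : 0 < σ)
    (hg : Measure.map g μ = gaussianReal 0 1)
    (he : Measure.map e μ = gaussianReal 0 (⟨σ^2, sq_nonneg σ⟩ : NNReal))
    (hindep : IndepFun g e μ) :
    ∫ ω, sgn (g ω + e ω) * g ω ∂μ = Real.sqrt (2/(π*(1+σ^2))) := by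
  set v : NNReal := (⟨σ^2, sq_nonneg σ⟩ : NNReal) with hvdef
  have hFm : Measurable (fun p : ℝ × ℝ => sgn (p.1 + p.2) * p.1) :=
    (sgn_measurable.comp (measurable_fst.add measurable_snd)).mul measurable_fst
  have h_joint : Measure.map (fun ω => (g ω, e ω)) μ
      = (gaussianReal 0 1).prod (gaussianReal 0 v) := by
    rw [← hg, ← he]
    exact (indepFun_iff_map_prod_eq_prod_map_map hgm.aemeasurable hem.aemeasurable).mp hindep
  have step1 : ∫ ω, sgn (g ω + e ω) * g ω ∂μ
      = ∫ p : ℝ × ℝ, sgn (p.1 + p.2) * p.1 ∂((gaussianReal 0 1).prod (gaussianReal 0 v)) := by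
    rw [← h_joint, integral_map (hgm.prodMk hem).aemeasurable hFm.aestronglyMeasurable]
  -- integrability
  have hid : Integrable (fun x : ℝ => x) (gaussianReal 0 1) := by
    rw [integrable_gaussian_iff 0 one_ne_zero]
    refine (integrable_xexp.const_mul (Real.sqrt (2*π))⁻¹).congr
      (Filter.Eventually.of_forall fun x => ?_)
    simp only [pdf_one]; ring
  have habs : Integrable (fun x : ℝ => |x|) (gaussianReal 0 1) := hid.abs
  have hnorm : ∀ y x : ℝ, ‖sgn (x + y) * x‖ = |x| := by
    intro y x
    rw [Real.norm_eq_abs, abs_mul, abs_sgn, one_mul]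
  have hF : Integrable (fun p : ℝ × ℝ => sgn (p.1 + p.2) * p.1)
      ((gaussianReal 0 1).prod (gaussianReal 0 v)) := by
    refine (integrable_prod_iff' hFm.aestronglyMeasurable).2 ⟨?_, ?_⟩
    · refine Filter.Eventually.of_forall fun y => ?_
      refine habs.mono' (hFm.comp (measurable_id.prodMk measurable_const)).aestronglyMeasurable
        (Filter.Eventually.of_forall fun x => ?_)
      rw [hnorm y x]
    · simp_rw [hnorm]
      exact integrable_const _
  rw [step1, MeasureTheory.integral_prod_symm _ hF]
  simp only
  calc ∫ y, ∫ x, sgn (x + y) * x ∂(gaussianReal 0 1) ∂(gaussianReal 0 v)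
      = ∫ y, (Real.sqrt (2*π))⁻¹ * (2 * rexp (-y^2/2)) ∂(gaussianReal 0 v) := by
        refine integral_congr_ae (Filter.Eventually.of_forall fun y => ?_)
        exact inner_int y
    _ = Real.sqrt (2/(π*(1+σ^2))) := outer_int hσ
end

section
/- Let s₀,…,s_{m-1} ∈ ℝⁿ be unit vectors with |⟨s_i, s_j⟩| ≤ ε for all i ≠ j, where m·ε < 1. Then for each i ∈ {1,…,m-1}, any unit vector t in the span of s₀,…,s_{i-1} satisfies ⟨s_i, t⟩² ≤ m·ε²/(1 - m·ε). -/
open Finset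

set_option maxHeartbeats 1000000 in
theorem stmt_12 {m n : ℕ} (s : Fin m → EuclideanSpace ℝ (Fin n)) (ε : ℝ) (hε : 0 ≤ ε)
    (hunit : ∀ i, ‖s i‖ = 1)
    (hortho : ∀ i j, i ≠ j → |(inner ℝ (s i) (s j) : ℝ)| ≤ ε)
    (hmε : m * ε < 1) :
    ∀ i : Fin m, ∀ t ∈ Submodule.span ℝ (s '' {j | j < i}), ‖t‖ = 1 →
      (inner ℝ (s i) t : ℝ)^2 ≤ m * ε^2 / (1 - m * ε) := by
  intro i t ht hnt
  have hm1 : 0 < 1 - (m:ℝ) * ε := by linarith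
  obtain ⟨l, hl, rfl⟩ := (Finsupp.mem_span_image_iff_linearCombination ℝ).mp ht
  set T : Finset (Fin m) := Finset.univ.filter (fun j => j < i) with hT
  have hsupp : l.support ⊆ T := by
    intro j hj
    simp only [hT, mem_filter, mem_univ, true_and]
    exact hl hj
  have hts : Finsupp.linearCombination ℝ s l = ∑ j ∈ T, l j • s j := by
    rw [Finsupp.linearCombination_apply, Finsupp.sum]
    exact Finset.sum_subset hsupp (fun x _ hx => by
      simp [Finsupp.notMem_support_iff.mp hx])
  rw [hts] at hnt ⊢
  set A : ℝ := ∑ j ∈ T, (l j)^2 with hA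
  set B : ℝ := ∑ j ∈ T, |l j| with hB
  have hA0 : 0 ≤ A := Finset.sum_nonneg fun j _ => sq_nonneg _
  have hB0 : 0 ≤ B := Finset.sum_nonneg fun j _ => abs_nonneg _
  have hcard : (T.card : ℝ) ≤ m := by
    exact_mod_cast Finset.card_le_card (Finset.subset_univ T) |>.trans (le_of_eq (Finset.card_univ.trans (Fintype.card_fin m)))
  have hB2 : B^2 ≤ (m:ℝ) * A := by
    have h := sq_sum_le_card_mul_sum_sq (s := T) (f := fun j => |l j|)
    simp only [sq_abs] at h
    calc B^2 ≤ (T.card : ℝ) * A := h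
      _ ≤ (m:ℝ) * A := by nlinarith
  -- inner expansion
  have hexp : (inner ℝ (∑ j ∈ T, l j • s j) (∑ j ∈ T, l j • s j) : ℝ)
      = ∑ j ∈ T, ∑ k ∈ T, l j * (l k * (inner ℝ (s j) (s k) : ℝ)) := by
    rw [sum_inner]
    refine Finset.sum_congr rfl fun j _ => ?_
    rw [real_inner_smul_left, inner_sum, Finset.mul_sum]
    refine Finset.sum_congr rfl fun k _ => ?_
    rw [real_inner_smul_right]
  have hone : ∀ j, (inner ℝ (s j) (s j) : ℝ) = 1 := fun j => by
    rw [real_inner_self_eq_norm_sq, hunit]; norm_num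
  have hsplit : ∑ j ∈ T, ∑ k ∈ T, l j * (l k * (inner ℝ (s j) (s k) : ℝ))
      = A + ∑ j ∈ T, ∑ k ∈ T.erase j, l j * (l k * (inner ℝ (s j) (s k) : ℝ)) := by
    rw [hA, ← Finset.sum_add_distrib]
    refine Finset.sum_congr rfl fun j hj => ?_
    rw [← Finset.add_sum_erase T _ hj, hone j]
    ring
  set R : ℝ := ∑ j ∈ T, ∑ k ∈ T.erase j, l j * (l k * (inner ℝ (s j) (s k) : ℝ)) with hR
  have hRabs : |R| ≤ ε * B^2 := by
    calc |R| ≤ ∑ j ∈ T, |∑ k ∈ T.erase j, l j * (l k * (inner ℝ (s j) (s k) : ℝ))| :=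
          Finset.abs_sum_le_sum_abs _ _
      _ ≤ ∑ j ∈ T, ∑ k ∈ T.erase j, |l j| * (|l k| * ε) := by
          refine Finset.sum_le_sum fun j _ => ?_
          refine (Finset.abs_sum_le_sum_abs _ _).trans (Finset.sum_le_sum fun k hk => ?_)
          rw [abs_mul, abs_mul]
          have hjk : j ≠ k := fun h => (Finset.ne_of_mem_erase hk h.symm).elim
          have := hortho j k hjk
          gcongr
      _ ≤ ∑ j ∈ T, ∑ k ∈ T, |l j| * (|l k| * ε) := by
          refine Finset.sum_le_sum fun j _ => ?_
          refine Finset.sum_le_sum_of_subset_of_nonneg (Finset.erase_subset _ _) fun k _ _ => ?_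
          positivity
      _ = ε * B^2 := by
          have h' : ∀ j ∈ T, ∑ k ∈ T, |l j| * (|l k| * ε) = |l j| * (B * ε) := fun j _ => by
            rw [← Finset.mul_sum, hB, Finset.sum_mul]
          rw [Finset.sum_congr rfl h', ← Finset.sum_mul, ← hB]
          ring
  have hnorm1 : A + R = 1 := by
    have h1 : (inner ℝ (∑ j ∈ T, l j • s j) (∑ j ∈ T, l j • s j) : ℝ) = 1 := by
      rw [real_inner_self_eq_norm_sq, hnt]; norm_num
    rw [hexp, hsplit] at h1
    exact h1
  have hAle : A * (1 - m * ε) ≤ 1 := by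
    have : A ≤ 1 + ε * B^2 := by
      have := abs_le.mp hRabs
      linarith
    nlinarith
  -- inner with s i
  have hi : (inner ℝ (s i) (∑ j ∈ T, l j • s j) : ℝ) = ∑ j ∈ T, l j * (inner ℝ (s i) (s j) : ℝ) := by
    rw [inner_sum]
    exact Finset.sum_congr rfl fun j _ => real_inner_smul_right _ _ _
  have habs : |(inner ℝ (s i) (∑ j ∈ T, l j • s j) : ℝ)| ≤ ε * B := by
    rw [hi]
    calc |∑ j ∈ T, l j * (inner ℝ (s i) (s j) : ℝ)| ≤ ∑ j ∈ T, |l j| * ε := by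
          refine (Finset.abs_sum_le_sum_abs _ _).trans (Finset.sum_le_sum fun j hj => ?_)
          rw [abs_mul]
          have hji : i ≠ j := fun h => by
            have := (Finset.mem_filter.mp hj).2
            rw [← h] at this
            exact lt_irrefl i this
          have := hortho i j hji
          gcongr
      _ = ε * B := by rw [hB, ← Finset.sum_mul]; ring
  have hsq : (inner ℝ (s i) (∑ j ∈ T, l j • s j) : ℝ)^2 ≤ ε^2 * B^2 := by
    have h1 := pow_le_pow_left₀ (abs_nonneg _) habs 2
    rw [sq_abs] at h1
    nlinarith [h1]
  rw [le_div_iff₀ hm1]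
  have h2 : ε^2 * B^2 ≤ ε^2 * ((m:ℝ) * A) := mul_le_mul_of_nonneg_left hB2 (sq_nonneg ε)
  have h4 : (inner ℝ (s i) (∑ j ∈ T, l j • s j) : ℝ)^2 * (1 - (m:ℝ) * ε)
      ≤ ε^2 * ((m:ℝ) * A) * (1 - (m:ℝ) * ε) :=
    mul_le_mul_of_nonneg_right (hsq.trans h2) hm1.le
  have h3 : ((m:ℝ) * ε^2) * (A * (1 - (m:ℝ) * ε)) ≤ ((m:ℝ) * ε^2) * 1 :=
    mul_le_mul_of_nonneg_left hAle (by positivity)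
  nlinarith [h4, h3]
end

section
/- Let s₀,…,s_{m-1} ∈ ℝⁿ be unit vectors such that m·ε < 1/2 and, for all i ≠ j, |⟨s_i, s_j⟩| ≤ ε. Then there exist vectors u₀,…,u_{m-1} and r₀,…,r_{m-1} in ℝⁿ with s_i = u_i + r_i for all i, such that: (1) u_i is orthogonal to the span of {u_j : j ≠ i}, and (2) ‖r_i‖₂² ≤ 2m·ε² for all i. -/
open Finset

theorem stmt_13 {m n : ℕ} (s : Fin m → EuclideanSpace ℝ (Fin n)) (ε : ℝ) (hε : 0 ≤ ε)
    (hunit : ∀ i, ‖s i‖ = 1)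
    (hortho : ∀ i j, i ≠ j → |(inner ℝ (s i) (s j) : ℝ)| ≤ ε)
    (hmε : m * ε < 1/2) :
    ∃ u r : Fin m → EuclideanSpace ℝ (Fin n),
      (∀ i, s i = u i + r i) ∧
      (∀ i, ∀ v ∈ Submodule.span ℝ (u '' {j | j ≠ i}), (inner ℝ (u i) v : ℝ) = 0) ∧
      (∀ i, ‖r i‖^2 ≤ 2 * m * ε^2) := by
  classical
  -- generators for partial spans
  set g : ℕ → Fin m → EuclideanSpace ℝ (Fin n) := fun k j => if (j : ℕ) < k then s j else 0 with hg
  set K : ℕ → Submodule ℝ (EuclideanSpace ℝ (Fin n)) := fun k => Submodule.span ℝ (Set.range (g k)) with hK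
  have hKmono : ∀ {k l : ℕ}, k ≤ l → K k ≤ K l := by
    intro k l hkl
    rw [hK]
    apply Submodule.span_le.2
    rintro _ ⟨j, rfl⟩
    by_cases h : (j : ℕ) < k
    · have : g k j = g l j := by simp [hg, h, lt_of_lt_of_le h hkl]
      rw [this]
      exact Submodule.subset_span ⟨j, rfl⟩
    · simp [hg, h]
  set r : Fin m → EuclideanSpace ℝ (Fin n) := fun i => (Submodule.orthogonalProjectionOnto (K (i : ℕ)) (s i) : EuclideanSpace ℝ (Fin n)) with hr
  set u : Fin m → EuclideanSpace ℝ (Fin n) := fun i => s i - r i with hu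
  have hrmem : ∀ i : Fin m, r i ∈ K (i : ℕ) := fun i => (Submodule.orthogonalProjectionOnto (K (i : ℕ)) (s i)).2
  have humem : ∀ i : Fin m, u i ∈ (K (i : ℕ))ᗮ := fun i =>
    Submodule.sub_starProjection_mem_orthogonal (K := K (i : ℕ)) (s i)
  have hsmem : ∀ i : Fin m, s i ∈ K ((i : ℕ) + 1) := by
    intro i
    have : g ((i : ℕ) + 1) i = s i := by simp [hg]
    rw [← this]
    exact Submodule.subset_span ⟨i, rfl⟩
  have humem' : ∀ i : Fin m, u i ∈ K ((i : ℕ) + 1) := by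
    intro i
    exact Submodule.sub_mem _ (hsmem i) (hKmono (Nat.le_succ _) (hrmem i))
  -- pairwise orthogonality
  have hpair : ∀ i j : Fin m, i ≠ j → (inner ℝ (u i) (u j) : ℝ) = 0 := by
    have key : ∀ i j : Fin m, (i : ℕ) < (j : ℕ) → (inner ℝ (u i) (u j) : ℝ) = 0 := by
      intro i j hij
      exact (humem j) (u i) (hKmono (Nat.succ_le_of_lt hij) (humem' i))
    intro i j hij
    rcases lt_or_gt_of_ne (fun h : (i : ℕ) = (j : ℕ) => hij (Fin.ext h)) with h | h
    · exact key i j h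
    · rw [real_inner_comm]; exact key j i h
  refine ⟨u, r, ?_, ?_, ?_⟩
  · intro i; simp [hu, sub_add_cancel]
  · intro i v hv
    induction hv using Submodule.span_induction with
    | mem x hx =>
      obtain ⟨j, hj, rfl⟩ := hx
      exact hpair i j (fun h => hj h.symm)
    | zero => exact inner_zero_right _
    | add x y hx hy ihx ihy => rw [inner_add_right, ihx, ihy, add_zero]
    | smul a x hx ih => rw [real_inner_smul_right, ih, mul_zero]
  · -- norm bound
    intro i
    have hri : r i ∈ Submodule.span ℝ (Set.range (g (i : ℕ))) := hrmem i
    obtain ⟨c, hc⟩ := (Submodule.mem_span_range_iff_exists_fun ℝ).1 hri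
    set c' : Fin m → ℝ := fun j => if (j : ℕ) < (i : ℕ) then c j else 0 with hc'
    have hrep : r i = ∑ j, c' j • s j := by
      rw [← hc]
      apply Finset.sum_congr rfl
      intro j _
      by_cases h : (j : ℕ) < (i : ℕ)
      · have hf : j < i := Fin.lt_def.2 h
        simp [hg, hc', h, hf]
      · have hf : ¬ j < i := fun hf => h (Fin.lt_def.1 hf)
        simp [hg, hc', h, hf]
    set A : ℝ := ‖r i‖^2 with hA
    set Q : ℝ := ∑ j, (c' j)^2 with hQ
    have hAnn : 0 ≤ A := sq_nonneg _
    have hQnn : 0 ≤ Q := Finset.sum_nonneg fun j _ => sq_nonneg _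
    have hAinner : A = (inner ℝ (r i) (r i) : ℝ) := (real_inner_self_eq_norm_sq _).symm
    -- A = ⟪s i, r i⟫
    have hAs : A = (inner ℝ (s i) (r i) : ℝ) := by
      have h0 : (inner ℝ (r i) (u i) : ℝ) = 0 := (humem i) (r i) (hrmem i)
      rw [hu] at h0
      simp only [inner_sub_right] at h0
      rw [hAinner]
      have hcomm := real_inner_comm (s i) (r i)
      linarith
    -- inner ℝ (s i) (s j) values
    have hsjj : ∀ j : Fin m, (inner ℝ (s j) (s j) : ℝ) = 1 := by
      intro j
      rw [real_inner_self_eq_norm_sq, hunit j]; norm_num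
    have habs : ∀ j k : Fin m, j ≠ k → |(inner ℝ (s j) (s k) : ℝ)| ≤ ε := hortho
    -- bound A ≤ ε * ∑ |c' j|
    have hA1 : A ≤ ε * ∑ j, |c' j| := by
      rw [hAs, hrep, inner_sum]
      calc (∑ j, (inner ℝ (s i) (c' j • s j) : ℝ))
          ≤ ∑ j, |(inner ℝ (s i) (c' j • s j) : ℝ)| :=
            Finset.sum_le_sum fun j _ => le_abs_self _
        _ ≤ ∑ j, ε * |c' j| := by
            apply Finset.sum_le_sum
            intro j _
            rw [real_inner_smul_right, abs_mul]
            by_cases h : (j : ℕ) < (i : ℕ)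
            · have hji : i ≠ j := fun h' => by simp [h'] at h
              calc |c' j| * |(inner ℝ (s i) (s j) : ℝ)| ≤ |c' j| * ε := by
                    exact mul_le_mul_of_nonneg_left (habs i j hji) (abs_nonneg _)
                _ = ε * |c' j| := mul_comm _ _
            · have hz : c' j = 0 := by
                simp only [hc']
                exact if_neg h
              rw [hz]
              simp [hε]
        _ = ε * ∑ j, |c' j| := (Finset.mul_sum _ _ _).symm
    -- Cauchy-Schwarz
    have hCS : (∑ j, |c' j|)^2 ≤ m * Q := by
      have := sq_sum_le_card_mul_sum_sq (s := (univ : Finset (Fin m))) (f := fun j => |c' j|)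
      simpa [hQ, sq_abs] using this
    -- lower bound for A
    have hA2 : (1 - m * ε) * Q ≤ A := by
      have hdouble : A = ∑ j, ∑ k, c' j * c' k * (inner ℝ (s j) (s k) : ℝ) := by
        rw [hAinner, hrep, sum_inner]
        apply Finset.sum_congr rfl
        intro j _
        rw [real_inner_smul_left, inner_sum, Finset.mul_sum]
        apply Finset.sum_congr rfl
        intro k _
        rw [real_inner_smul_right]; ring
      have hsplit : ∀ j : Fin m, ∑ k, c' j * c' k * (inner ℝ (s j) (s k) : ℝ)
          = (c' j)^2 + ∑ k ∈ univ.erase j, c' j * c' k * (inner ℝ (s j) (s k) : ℝ) := by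
        intro j
        rw [← Finset.add_sum_erase _ _ (Finset.mem_univ j), hsjj j]
        ring_nf
      have hoff : |∑ j, ∑ k ∈ univ.erase j, c' j * c' k * (inner ℝ (s j) (s k) : ℝ)|
          ≤ ε * ((∑ j, |c' j|)^2 - Q) := by
        calc |∑ j, ∑ k ∈ univ.erase j, c' j * c' k * (inner ℝ (s j) (s k) : ℝ)|
            ≤ ∑ j, |∑ k ∈ univ.erase j, c' j * c' k * (inner ℝ (s j) (s k) : ℝ)| :=
              Finset.abs_sum_le_sum_abs _ _
          _ ≤ ∑ j, ∑ k ∈ univ.erase j, |c' j * c' k * (inner ℝ (s j) (s k) : ℝ)| :=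
              Finset.sum_le_sum fun j _ => Finset.abs_sum_le_sum_abs _ _
          _ ≤ ∑ j, ∑ k ∈ univ.erase j, ε * (|c' j| * |c' k|) := by
              apply Finset.sum_le_sum; intro j _
              apply Finset.sum_le_sum; intro k hk
              have hjk : j ≠ k := fun h => (Finset.mem_erase.1 hk).1 h.symm
              rw [abs_mul, abs_mul]
              calc |c' j| * |c' k| * |(inner ℝ (s j) (s k) : ℝ)|
                  ≤ |c' j| * |c' k| * ε :=
                    mul_le_mul_of_nonneg_left (habs j k hjk)
                      (mul_nonneg (abs_nonneg _) (abs_nonneg _))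
                _ = ε * (|c' j| * |c' k|) := mul_comm _ _
          _ = ε * ∑ j, ∑ k ∈ univ.erase j, |c' j| * |c' k| := by
              rw [Finset.mul_sum]
              exact Finset.sum_congr rfl fun j _ => (Finset.mul_sum _ _ _).symm
          _ = ε * ((∑ j, |c' j|)^2 - Q) := by
              congr 1
              have h1 : (∑ j, |c' j|)^2 = ∑ j, ∑ k, |c' j| * |c' k| := by
                rw [sq, Finset.sum_mul_sum]
              have h2 : ∀ j : Fin m, ∑ k, |c' j| * |c' k|
                  = (c' j)^2 + ∑ k ∈ univ.erase j, |c' j| * |c' k| := by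
                intro j
                rw [← Finset.add_sum_erase _ (fun k => |c' j| * |c' k|) (Finset.mem_univ j),
                  ← abs_mul, ← sq, abs_sq]
              rw [h1, Finset.sum_congr rfl fun j _ => h2 j, Finset.sum_add_distrib, hQ]
              ring
      have hAeq : A = Q + ∑ j, ∑ k ∈ univ.erase j, c' j * c' k * (inner ℝ (s j) (s k) : ℝ) := by
        rw [hdouble, Finset.sum_congr rfl fun j _ => hsplit j, Finset.sum_add_distrib, hQ]
      have h1 : ε * ((∑ j, |c' j|)^2 - Q) ≤ ε * ((m : ℝ) * Q) := by
        apply mul_le_mul_of_nonneg_left _ hε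
        linarith
      have h2 : -(ε * ((m : ℝ) * Q)) ≤ ∑ j, ∑ k ∈ univ.erase j, c' j * c' k * (inner ℝ (s j) (s k) : ℝ) := by
        have := (abs_le.1 hoff).1
        linarith
      rw [hAeq]
      have : (1 - (m:ℝ) * ε) * Q = Q - ε * ((m:ℝ) * Q) := by ring
      linarith
    -- combine
    have hhalf : (1 : ℝ)/2 ≤ 1 - m * ε := by linarith
    have hQA : Q ≤ 2 * A := by
      have h1 : (1/2 : ℝ) * Q ≤ (1 - m * ε) * Q := mul_le_mul_of_nonneg_right hhalf hQnn
      linarith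
    have hAsq : A^2 ≤ ε^2 * ((m : ℝ) * Q) := by
      have h1 : A^2 ≤ (ε * ∑ j, |c' j|)^2 := by
        apply sq_le_sq' _ hA1
        have : 0 ≤ ε * ∑ j, |c' j| :=
          mul_nonneg hε (Finset.sum_nonneg fun j _ => abs_nonneg _)
        linarith
      calc A^2 ≤ (ε * ∑ j, |c' j|)^2 := h1
        _ = ε^2 * (∑ j, |c' j|)^2 := by ring
        _ ≤ ε^2 * ((m : ℝ) * Q) := mul_le_mul_of_nonneg_left hCS (sq_nonneg _)
    have hmQ : (m : ℝ) * Q ≤ (m : ℝ) * (2 * A) :=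
      mul_le_mul_of_nonneg_left hQA (Nat.cast_nonneg m)
    have h3 : A^2 ≤ ε^2 * ((m : ℝ) * (2 * A)) :=
      le_trans hAsq (mul_le_mul_of_nonneg_left hmQ (sq_nonneg ε))
    have hfinal : A * A ≤ 2 * (m : ℝ) * ε^2 * A := by
      have he : ε^2 * ((m : ℝ) * (2 * A)) = 2 * (m : ℝ) * ε^2 * A := by ring
      have hp : A^2 = A * A := sq A
      linarith
    rcases eq_or_lt_of_le hAnn with h0 | h0
    · rw [← h0]
      positivity
    · exact le_of_mul_le_mul_right hfinal h0
end
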